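/- Every nonempty Motzkin meander with catastrophes P admits a unique decomposition into exactly one of the forms: P = Fα with α a Motzkin meander with catastrophes; P = Uα₁Uα₂⋯Uα_k where k≥1 and each α_j is a Motzkin path (so P never returns to the x-axis after its first step); or P = Uα₁Uα₂⋯Uα_k D_k β where k≥1, each α_j is a Motzkin path, D_1:=D, and β is a Motzkin meander with catastrophes. -/

import Mathlib

/-- Every prefix of the path has nonnegative sum (the path stays weakly above the x-axis). -/
def NonnegPrefixes (w : List ℤ) : Prop := ∀ p ∈ w.inits, 0 ≤ p.sum

/-- A Dyck word: steps U = 1 and D = -1, nonnegative prefixes, ending at height 0. -/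
def IsDyckWord (w : List ℤ) : Prop :=
  (∀ s ∈ w, s = 1 ∨ s = -1) ∧ NonnegPrefixes w ∧ w.sum = 0

/-- A Motzkin path: steps U = 1, F = 0, D = -1, nonnegative prefixes, ending at height 0. -/
def IsMotzkinWord (w : List ℤ) : Prop :=
  (∀ s ∈ w, s = 1 ∨ s = 0 ∨ s = -1) ∧ NonnegPrefixes w ∧ w.sum = 0

/-- A Dyck meander with catastrophes: steps U = 1, D = -1, D_i = -i (i ≥ 2),
nonnegative, and every catastrophe step D_i (i ≥ 2) lands exactly at height 0. -/
def IsDyckMeanderCat (w : List ℤ) : Prop :=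
  (∀ s ∈ w, s = 1 ∨ s ≤ -1) ∧ NonnegPrefixes w ∧
    ∀ i, i < w.length → w.getD i 0 ≤ -2 → (w.take (i+1)).sum = 0

/-- A Motzkin meander with catastrophes: steps U = 1, F = 0, D = -1, D_i = -i (i ≥ 2),
nonnegative, every catastrophe landing exactly at height 0. -/
def IsMotzkinMeanderCat (w : List ℤ) : Prop :=
  (∀ s ∈ w, s ≤ 1) ∧ NonnegPrefixes w ∧
    ∀ i, i < w.length → w.getD i 0 ≤ -2 → (w.take (i+1)).sum = 0

def IsDyckExcursionCat (w : List ℤ) : Prop := IsDyckMeanderCat w ∧ w.sum = 0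

def IsMotzkinExcursionCat (w : List ℤ) : Prop := IsMotzkinMeanderCat w ∧ w.sum = 0

/-- The factor `pat` occurs in `w` starting at position `i`. -/
def OccursAt (pat w : List ℤ) (i : ℕ) : Prop := pat <+: w.drop i

/-- `w` has no occurrence of the factor `pat`. -/
def Avoids (pat w : List ℤ) : Prop := ∀ i, ¬ OccursAt pat w i

/-- `w` has no occurrence of `pat` starting at height h > 0. -/
def AvoidsAtPosHeight (pat w : List ℤ) : Prop :=
  ∀ i, OccursAt pat w i → (w.take i).sum ≤ 0

/-- `w` has no occurrence of `pat` starting at height h ≥ 2. -/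
def AvoidsAtHeightGe2 (pat w : List ℤ) : Prop :=
  ∀ i, OccursAt pat w i → (w.take i).sum < 2

def pUUU : List ℤ := [1, 1, 1]
def pDUD : List ℤ := [-1, 1, -1]
def pUUD : List ℤ := [1, 1, -1]
def pUD : List ℤ := [1, -1]
def pDU : List ℤ := [-1, 1]




lemma nonnegPrefixes_iff (w : List ℤ) : NonnegPrefixes w ↔ ∀ n, 0 ≤ (w.take n).sum := by
  constructor
  · intro h n
    exact h _ ((List.mem_inits _ _).2 (List.take_prefix n w))
  · intro h p hp
    obtain ⟨t, rfl⟩ := (List.mem_inits _ _).1 hp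
    have := h p.length
    simpa using this

lemma sum_flatten_map (L : List (List ℤ)) (hL : ∀ a ∈ L, a.sum = 0) :
    ((L.map (fun a => 1 :: a)).flatten).sum = L.length := by
  induction L with
  | nil => simp
  | cons a L ih =>
    simp only [List.map_cons, List.flatten_cons, List.sum_append, List.sum_cons,
      List.length_cons, hL a (by simp), ih (fun b hb => hL b (by simp [hb]))]
    push_cast; ring

lemma take_flatten_nonneg (L : List (List ℤ)) (hL : ∀ a ∈ L, IsMotzkinWord a) (n : ℕ) :
    0 ≤ (((L.map (fun a => 1 :: a)).flatten).take n).sum := by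
  induction L generalizing n with
  | nil => simp
  | cons a L ih =>
    simp only [List.map_cons, List.flatten_cons, List.take_append,
      List.sum_append]
    have h1 : (0:ℤ) ≤ (((1 :: a)).take n).sum := by
      cases n with
      | zero => simp
      | succ m =>
        simp only [List.take_succ_cons, List.sum_cons]
        have := ((nonnegPrefixes_iff a).1 (hL a (by simp)).2.1) m
        linarith
    have h2 := ih (fun b hb => hL b (by simp [hb])) (n - (1 :: a).length)
    linarith

lemma take_flatten_pos (L : List (List ℤ)) (hL : ∀ a ∈ L, IsMotzkinWord a) (hne : L ≠ [])
    (n : ℕ) (hn : 0 < n) :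
    1 ≤ (((L.map (fun a => 1 :: a)).flatten).take n).sum := by
  obtain ⟨a, L, rfl⟩ := List.exists_cons_of_ne_nil hne
  obtain ⟨m, rfl⟩ := Nat.exists_eq_add_of_lt hn
  simp only [List.map_cons, List.flatten_cons, List.take_append, List.sum_append,
    zero_add]
  have h1 : (1:ℤ) ≤ (((1 :: a)).take (m+1)).sum := by
    simp only [List.take_succ_cons, List.sum_cons]
    have := ((nonnegPrefixes_iff a).1 (hL a (by simp)).2.1) m
    linarith
  have h2 := take_flatten_nonneg L (fun b hb => hL b (by simp [hb])) ((m+1) - (1 :: a).length)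
  linarith


lemma heads_eq (a b r₁ r₂ : List ℤ) (L₁ : List (List ℤ))
    (ha : a.sum = 0) (hb : b.sum = 0)
    (hr : r₁ = (L₁.map (fun x => 1 :: x)).flatten) (hL : ∀ x ∈ L₁, IsMotzkinWord x)
    (hlen : a.length ≤ b.length) (heq : a ++ r₁ = b ++ r₂) : a = b := by
  have hab : a = b.take a.length := by
    have := congrArg (List.take a.length) heq
    rw [List.take_left, List.take_append, Nat.sub_eq_zero_of_le hlen] at this
    simpa using this
  set t := b.drop a.length with ht
  have hbt : b = a ++ t := by rw [hab, ht]; simp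
  have hts : t.sum = 0 := by
    have := hbt ▸ hb
    rw [List.sum_append, ha] at this; linarith
  have hr1 : r₁ = t ++ r₂ := by
    have := congrArg (List.drop a.length) heq
    rw [List.drop_left] at this
    rw [this, hbt, List.drop_append]
    simp
  by_cases htn : t = []
  · rw [hbt, htn, List.append_nil]
  · exfalso
    have hL1 : L₁ ≠ [] := by
      rintro rfl
      simp at hr
      rw [hr] at hr1
      exact htn (List.append_eq_nil_iff.1 hr1.symm).1
    have htake : t = r₁.take t.length := by
      rw [hr1, List.take_append]
      simp
    have := take_flatten_pos L₁ hL hL1 t.length (by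
      simpa [List.length_pos_iff] using htn)
    rw [← hr, ← htake, hts] at this
    norm_num at this

lemma flatten_inj (L₁ L₂ : List (List ℤ)) (h₁ : ∀ x ∈ L₁, IsMotzkinWord x)
    (h₂ : ∀ x ∈ L₂, IsMotzkinWord x)
    (heq : (L₁.map (fun x => 1 :: x)).flatten = (L₂.map (fun x => 1 :: x)).flatten) :
    L₁ = L₂ := by
  induction L₁ generalizing L₂ with
  | nil =>
    cases L₂ with
    | nil => rfl
    | cons b L₂ => simp at heq
  | cons a L₁ ih =>
    cases L₂ with
    | nil => simp at heq
    | cons b L₂ =>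
      simp only [List.map_cons, List.flatten_cons, List.cons_append, List.cons.injEq] at heq
      obtain ⟨-, heq⟩ := heq
      have hab : a = b := by
        rcases le_total a.length b.length with h | h
        · exact heads_eq a b _ _ L₁ (h₁ a (by simp)).2.2 (h₂ b (by simp)).2.2 rfl
            (fun x hx => h₁ x (by simp [hx])) h heq
        · exact (heads_eq b a _ _ L₂ (h₂ b (by simp)).2.2 (h₁ a (by simp)).2.2 rfl
            (fun x hx => h₂ x (by simp [hx])) h heq.symm).symm
      subst hab
      have : (L₁.map (fun x => 1 :: x)).flatten = (L₂.map (fun x => 1 :: x)).flatten :=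
        List.append_cancel_left heq
      rw [ih L₂ (fun x hx => h₁ x (by simp [hx])) (fun x hx => h₂ x (by simp [hx])) this]


lemma blocks_exist : ∀ (N : ℕ) (Q : List ℤ), Q.length ≤ N →
    (∀ s ∈ Q, s = 1 ∨ s = 0 ∨ s = -1) →
    (∀ n, 0 < n → n ≤ Q.length → 1 ≤ (Q.take n).sum) →
    Q ≠ [] →
    ∃ L : List (List ℤ), L ≠ [] ∧ (∀ a ∈ L, IsMotzkinWord a) ∧
      Q = (L.map (fun a => 1 :: a)).flatten := by
  intro N
  induction N with
  | zero => intro Q hlen _ _ hne; simp [List.length_eq_zero_iff.1 (Nat.le_zero.1 hlen)] at hne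
  | succ N ih =>
    intro Q hlen h1 h2 hne
    have hQlen : 1 ≤ Q.length := List.length_pos_iff.2 hne
    obtain ⟨q, T, rfl⟩ := List.exists_cons_of_ne_nil hne
    have hq1 : q = 1 := by
      have ha := h2 1 one_pos hQlen
      have hb := h1 q (by simp)
      simp at ha
      omega
    subst hq1
    classical
    set i := Nat.findGreatest (fun n => (((1:ℤ) :: T).take n).sum = 1) (1 :: T).length with hidef
    have hP1 : (((1:ℤ) :: T).take 1).sum = 1 := by simp
    have hi1 : 1 ≤ i := Nat.le_findGreatest hQlen hP1
    have hiQ : (((1:ℤ) :: T).take i).sum = 1 := Nat.findGreatest_spec (P := fun n => (((1:ℤ) :: T).take n).sum = 1) hQlen hP1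
    have hile : i ≤ (1 :: T).length := Nat.findGreatest_le _
    have hgt : ∀ n, i < n → n ≤ (1 :: T).length → (((1:ℤ) :: T).take n).sum ≠ 1 :=
      fun n h h' => Nat.findGreatest_is_greatest h h'
    clear_value i
    obtain ⟨m, rfl⟩ : ∃ m, i = m + 1 := ⟨i - 1, by omega⟩
    set α := T.take m with hα
    have hQi : ((1:ℤ) :: T).take (m+1) = 1 :: α := by simp [hα]
    have hαmw : IsMotzkinWord α := by
      refine ⟨fun s hs => h1 s (by simp [List.take_subset m T hs]), ?_, ?_⟩
      · rw [nonnegPrefixes_iff]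
        intro n
        have key : (((1:ℤ) :: T).take (min (n+1) (m+1))).sum = 1 + (α.take n).sum := by
          rw [← List.take_take, hQi]
          simp
        have := h2 (min (n+1) (m+1)) (by omega) (by omega)
        rw [key] at this
        linarith
      · rw [hQi] at hiQ
        simp at hiQ
        linarith
    rcases eq_or_lt_of_le hile with heq | hlt
    · refine ⟨[α], by simp, by simpa using hαmw, ?_⟩
      have : ((1:ℤ) :: T).take (m+1) = 1 :: T := by rw [heq]; exact List.take_length
      rw [hQi] at this
      simp [← this]
    · set R := ((1:ℤ) :: T).drop (m+1) with hR
      have hRlen : R.length = (1 :: T).length - (m+1) := by simp [hR]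
      have hRne : R ≠ [] := by
        have : 0 < R.length := by omega
        exact List.length_pos_iff.1 this
      have hsplit : ∀ n, ((1:ℤ) :: T).take (m+1+n) = (1 :: α) ++ R.take n := by
        intro n; rw [List.take_add, hQi]
      obtain ⟨L', hL'ne, hL'mw, hL'eq⟩ := ih R (by omega)
        (fun s hs => h1 s (List.drop_subset _ _ hs))
        (by
          intro n hn hnle
          have h1n := h2 (m+1+n) (by omega) (by omega)
          have h2n := hgt (m+1+n) (by omega) (by omega)
          rw [hsplit n, List.sum_append] at h1n h2n
          rw [hQi] at hiQ
          simp only [List.sum_cons] at h1n h2n hiQ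
          omega)
        hRne
      refine ⟨α :: L', by simp, ?_, ?_⟩
      · intro a ha
        rcases List.mem_cons.1 ha with rfl | ha
        · exact hαmw
        · exact hL'mw a ha
      · have : (1:ℤ) :: T = ((1:ℤ) :: T).take (m+1) ++ R := (List.take_append_drop _ _).symm
        rw [this, hQi, hL'eq]
        simp



lemma flatten_cons_form (L : List (List ℤ)) (h : L ≠ []) :
    ∃ r, (L.map (fun a => 1 :: a)).flatten = (1:ℤ) :: r := by
  obtain ⟨a, L, rfl⟩ := List.exists_cons_of_ne_nil h
  exact ⟨a ++ (L.map (fun a => 1 :: a)).flatten, by simp⟩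

lemma catform_ret (L : List (List ℤ)) (β : List ℤ) (hL : L ≠ [])
    (hmw : ∀ a ∈ L, IsMotzkinWord a) :
    1 ≤ ((L.map (fun a => 1 :: a)).flatten).length ∧
    (((L.map (fun a => 1 :: a)).flatten ++ (-(L.length:ℤ)) :: β).take
        (((L.map (fun a => 1 :: a)).flatten).length + 1)).sum = 0 := by
  set F := (L.map (fun a => 1 :: a)).flatten with hF
  obtain ⟨r, hr⟩ := flatten_cons_form L hL
  constructor
  · rw [hF, hr]; simp
  · rw [List.take_append]
    have h1 : F.take (F.length + 1) = F := List.take_of_length_le (by omega)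
    have h2 : F.length + 1 - F.length = 1 := by omega
    rw [h1, h2, List.sum_append]
    have := sum_flatten_map L (fun a ha => (hmw a ha).2.2)
    rw [← hF] at this
    simp [this]

/-- Every nonempty Motzkin meander with catastrophes P decomposes uniquely into
exactly one of the forms: P = Fα (α a Motzkin meander with catastrophes);
P = Uα₁Uα₂⋯Uα_k with k ≥ 1 and each α_j a Motzkin path; or
P = Uα₁⋯Uα_k D_k β with k ≥ 1, each α_j a Motzkin path, D₁ := D, and β a Motzkin
meander with catastrophes. -/
theorem stmt_16 (P : List ℤ) (hP : IsMotzkinMeanderCat P) (hne : P ≠ []) :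
    ∃! d : (List ℤ) ⊕ (List (List ℤ)) ⊕ (List (List ℤ) × List ℤ),
      match d with
      | .inl α => IsMotzkinMeanderCat α ∧ P = 0 :: α
      | .inr (.inl L) => L ≠ [] ∧ (∀ a ∈ L, IsMotzkinWord a) ∧
          P = (L.map (fun a => 1 :: a)).flatten
      | .inr (.inr (L, β)) => L ≠ [] ∧ (∀ a ∈ L, IsMotzkinWord a) ∧
          IsMotzkinMeanderCat β ∧
          P = (L.map (fun a => 1 :: a)).flatten ++ (-(L.length : ℤ)) :: β := by
  classical
  obtain ⟨hstep, hpre, hcat⟩ := hP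
  have hpre' : ∀ n, 0 ≤ (P.take n).sum := (nonnegPrefixes_iff P).1 hpre
  obtain ⟨p, T, rfl⟩ := List.exists_cons_of_ne_nil hne
  have hp1 : p ≤ 1 := hstep p (by simp)
  have hp0 : 0 ≤ p := by have := hpre' 1; simpa using this
  have hp : p = 0 ∨ p = 1 := by omega
  rcases hp with rfl | rfl
  · -- F case
    refine ⟨.inl T, ⟨?_, rfl⟩, ?_⟩
    · refine ⟨fun s hs => hstep s (by simp [hs]), ?_, ?_⟩
      · rw [nonnegPrefixes_iff]
        intro n
        have := hpre' (n+1)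
        simpa using this
      · intro i hi hgd
        have := hcat (i+1) (by simpa using hi) (by simpa using hgd)
        simpa using this
    · rintro (α' | L' | ⟨L', β'⟩) hd'
      · obtain ⟨-, heq⟩ := hd'
        simp only [List.cons.injEq] at heq
        rw [heq.2]
      · obtain ⟨hne', -, heq⟩ := hd'
        obtain ⟨r, hr⟩ := flatten_cons_form L' hne'
        rw [hr] at heq
        simp at heq
      · obtain ⟨hne', -, -, heq⟩ := hd'
        obtain ⟨r, hr⟩ := flatten_cons_form L' hne'
        rw [hr] at heq
        simp at heq
  · -- U case
    have hsteps3 : ∀ (bound : ℕ), bound ≤ ((1:ℤ)::T).length →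
        (∀ n, 0 < n → n ≤ bound → 1 ≤ (((1:ℤ)::T).take n).sum) →
        ∀ s ∈ ((1:ℤ)::T).take bound, s = 1 ∨ s = 0 ∨ s = -1 := by
      intro bound hb hpos s hs
      obtain ⟨j, hj, hjs⟩ := List.mem_iff_getElem.1 hs
      have hjb : j < bound := by
        rw [List.length_take] at hj; omega
      have hjlen : j < ((1:ℤ)::T).length := lt_of_lt_of_le hjb hb
      rw [List.getElem_take] at hjs
      have hs1 : s ≤ 1 := hstep s (List.take_subset _ _ hs)
      by_contra hcon
      push_neg at hcon
      have hle : ((1:ℤ)::T).getD j 0 ≤ -2 := by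
        rw [List.getD_eq_getElem _ _ hjlen, hjs]; omega
      have h0 := hcat j hjlen hle
      have h1 := hpos (j+1) (by omega) (by omega)
      omega
    by_cases hret : ∃ n, 2 ≤ n ∧ n ≤ ((1:ℤ)::T).length ∧ (((1:ℤ)::T).take n).sum = 0
    · -- return via catastrophe / D step
      have hfind := Nat.find_spec hret
      obtain ⟨n₀, hn₀def⟩ : ∃ n, n = Nat.find hret := ⟨_, rfl⟩
      rw [← hn₀def] at hfind
      obtain ⟨hn₀2, hn₀len, hn₀sum⟩ := hfind
      have hmin : ∀ m, m < n₀ →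
          ¬(2 ≤ m ∧ m ≤ ((1:ℤ)::T).length ∧ (((1:ℤ)::T).take m).sum = 0) := by
        intro m hm
        exact Nat.find_min hret (by omega)
      obtain ⟨i, hidef⟩ : ∃ j, j = n₀ - 1 := ⟨_, rfl⟩
      have hi1 : i + 1 = n₀ := by omega
      have hpos : ∀ n, 0 < n → n ≤ i → 1 ≤ (((1:ℤ)::T).take n).sum := by
        intro n hn hnle
        rcases Nat.lt_or_ge n 2 with h | h
        · interval_cases n; simp
        · have h0 := hpre' n
          have hne0 := hmin n (by omega)
          push_neg at hne0
          have := hne0 h (by omega)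
          omega
      have hQlen : (((1:ℤ)::T).take i).length = i := by
        rw [List.length_take]; omega
      have hQne : ((1:ℤ)::T).take i ≠ [] := by
        have : 0 < (((1:ℤ)::T).take i).length := by omega
        exact List.length_pos_iff.1 this
      have hQpos : ∀ n, 0 < n → n ≤ (((1:ℤ)::T).take i).length →
          1 ≤ ((((1:ℤ)::T).take i).take n).sum := by
        intro n hn hnle
        rw [List.take_take, min_eq_left (by omega)]
        exact hpos n hn (by omega)
      obtain ⟨L, hLne, hLmw, hLeq⟩ := blocks_exist (((1:ℤ)::T).take i).length
        (((1:ℤ)::T).take i) le_rfl (hsteps3 i (by omega) hpos) hQpos hQne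
      have hQsum : (((1:ℤ)::T).take i).sum = L.length := by
        rw [hLeq]; exact sum_flatten_map L (fun a ha => (hLmw a ha).2.2)
      have hilen : i < ((1:ℤ)::T).length := by omega
      have hstep_i : (((1:ℤ)::T).take i).sum + ((1:ℤ)::T)[i] = 0 := by
        have h := List.sum_take_succ ((1:ℤ)::T) i hilen
        rw [hi1] at h
        omega
      have hc : ((1:ℤ)::T)[i] = -(L.length:ℤ) := by omega
      have hβlen : (((1:ℤ)::T).drop n₀).length = ((1:ℤ)::T).length - n₀ :=
        List.length_drop
      have hdecomp : (1:ℤ)::T =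
          (L.map (fun a => 1 :: a)).flatten ++ (-(L.length:ℤ)) :: ((1:ℤ)::T).drop n₀ := by
        conv_lhs => rw [← List.take_append_drop i ((1:ℤ)::T)]
        rw [List.drop_eq_getElem_cons hilen, hc, hi1, hLeq]
      have hβtake : ∀ m, (((1:ℤ)::T).take (n₀ + m)).sum = ((((1:ℤ)::T).drop n₀).take m).sum := by
        intro m
        rw [List.take_add, List.sum_append, hn₀sum, zero_add]
      have hβmc : IsMotzkinMeanderCat (((1:ℤ)::T).drop n₀) := by
        refine ⟨fun s hs => hstep s (List.drop_subset _ _ hs), ?_, ?_⟩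
        · rw [nonnegPrefixes_iff]
          intro m
          rw [← hβtake m]
          exact hpre' _
        · intro m hm hgd
          have hidx : n₀ + m < ((1:ℤ)::T).length := by
            rw [List.length_drop] at hm; omega
          have hgd' : ((1:ℤ)::T).getD (n₀ + m) 0 ≤ -2 := by
            rw [List.getD_eq_getElem _ _ hm, List.getElem_drop] at hgd
            rw [List.getD_eq_getElem _ _ hidx]
            exact hgd
          have h0 := hcat (n₀ + m) hidx hgd'
          have he : n₀ + m + 1 = n₀ + (m + 1) := by omega
          rw [he, hβtake (m+1)] at h0
          exact h0
      refine ⟨.inr (.inr (L, ((1:ℤ)::T).drop n₀)), ⟨hLne, hLmw, hβmc, hdecomp⟩, ?_⟩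
      rintro (α' | L' | ⟨L', β'⟩) hd'
      · obtain ⟨-, heq⟩ := hd'
        simp at heq
      · obtain ⟨hne', hmw', heq⟩ := hd'
        exfalso
        have := take_flatten_pos L' hmw' hne' n₀ (by omega)
        rw [← heq] at this
        omega
      · obtain ⟨hne', hmw', hβ', heq⟩ := hd'
        obtain ⟨hF1, hFsum⟩ := catform_ret L' β' hne' hmw'
        set F := (L'.map (fun a => 1 :: a)).flatten with hFdef
        have hlen_eq : ((1:ℤ)::T).length = F.length + 1 + β'.length := by
          rw [heq]
          simp only [List.length_append, List.length_cons]
          omega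
        have hn₀le : n₀ ≤ F.length + 1 := by
          rw [hn₀def]
          apply Nat.find_min'
          refine ⟨by omega, by omega, ?_⟩
          rw [heq]; exact hFsum
        have hn₀gt : ¬ n₀ ≤ F.length := by
          intro hcontra
          have h1 : (((1:ℤ)::T).take n₀).sum = (F.take n₀).sum := by
            rw [heq, List.take_append, Nat.sub_eq_zero_of_le hcontra]
            simp
          have h2 := take_flatten_pos L' hmw' hne' n₀ (by omega)
          rw [← hFdef] at h2
          omega
        have hFi : F.length = i := by omega
        have hFQ : List.take i ((1:ℤ)::T) = F := by
          have h := congrArg (List.take F.length) heq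
          rw [List.take_left] at h
          rw [hFi] at h
          exact h
        have hLL : L' = L := by
          apply flatten_inj L' L hmw' hLmw
          rw [← hFdef, ← hFQ, hLeq]
        have hββ : β' = ((1:ℤ)::T).drop n₀ := by
          have h2 := congrArg (List.drop n₀) heq
          rw [List.drop_append] at h2
          have hd1 : List.drop n₀ F = [] := List.drop_eq_nil_of_le (by omega)
          have hd2 : n₀ - F.length = 1 := by omega
          rw [hd1, hd2] at h2
          simpa using h2.symm
        rw [hLL, hββ]
    · -- no return: pure meander above the axis
      have hpos : ∀ n, 0 < n → n ≤ ((1:ℤ)::T).length → 1 ≤ (((1:ℤ)::T).take n).sum := by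
        intro n hn hnl
        rcases Nat.lt_or_ge n 2 with h | h
        · interval_cases n; simp
        · have h0 := hpre' n
          have hne0 : (((1:ℤ)::T).take n).sum ≠ 0 := fun hS => hret ⟨n, h, hnl, hS⟩
          omega
      have hsteps : ∀ s ∈ (1:ℤ)::T, s = 1 ∨ s = 0 ∨ s = -1 := by
        have := hsteps3 ((1:ℤ)::T).length le_rfl hpos
        rw [List.take_length] at this
        exact this
      obtain ⟨L, hLne, hLmw, hLeq⟩ := blocks_exist ((1:ℤ)::T).length ((1:ℤ)::T) le_rfl
        hsteps hpos (by simp)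
      refine ⟨.inr (.inl L), ⟨hLne, hLmw, hLeq⟩, ?_⟩
      rintro (α' | L' | ⟨L', β'⟩) hd'
      · obtain ⟨-, heq⟩ := hd'
        simp at heq
      · obtain ⟨hne', hmw', heq⟩ := hd'
        rw [flatten_inj L' L hmw' hLmw (heq.symm.trans hLeq)]
      · obtain ⟨hne', hmw', hβ', heq⟩ := hd'
        exfalso
        obtain ⟨hF1, hFsum⟩ := catform_ret L' β' hne' hmw'
        set F := (L'.map (fun a => 1 :: a)).flatten with hFdef
        have hlen_eq : ((1:ℤ)::T).length = F.length + 1 + β'.length := by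
          rw [heq]
          simp only [List.length_append, List.length_cons]
          omega
        exact hret ⟨F.length + 1, by omega, by omega, by rw [heq]; exact hFsum⟩
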